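/- For every m ≥ 1, the maximal dimension of an abelian Lie subalgebra of the Lie algebra of real skew-symmetric m×m matrices is exactly ⌊m/2⌋: every Lie subalgebra L of the skew-symmetric m×m real matrices on which the Lie bracket vanishes identically satisfies dim_ℝ L ≤ ⌊m/2⌋, and there exists such an abelian Lie subalgebra of dimension exactly ⌊m/2⌋. -/

import Mathlib

open Matrix Module Complex Module.End

attribute [local instance 100] LieRing.ofAssociativeRing

section Upper

variable {m : ℕ}

/-- The Hermitian operator `i A` on `ℂ^m` associated to a real matrix `A`. -/
noncomputable def opI (m : ℕ) (A : Matrix (Fin m) (Fin m) ℝ) :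
    EuclideanSpace ℂ (Fin m) →ₗ[ℂ] EuclideanSpace ℂ (Fin m) :=
  Matrix.toEuclideanLin ((Complex.I : ℂ) • A.map (Complex.ofRealHom))

lemma opI_symmetric (A : Matrix (Fin m) (Fin m) ℝ) (hA : Aᵀ = -A) :
    (opI m A).IsSymmetric := by
  unfold opI
  rw [← Matrix.isHermitian_iff_isSymmetric]
  show (Complex.I • A.map Complex.ofRealHom)ᴴ = _
  ext i j
  have hAij : A j i = -A i j := by
    have := congrFun (congrFun hA i) j
    simpa [Matrix.transpose_apply, Matrix.neg_apply] using this
  simp only [Matrix.conjTranspose_apply, Matrix.smul_apply, Matrix.map_apply, smul_eq_mul,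
    star_mul', Complex.star_def, Complex.conj_I, Complex.ofRealHom_eq_coe, hAij]
  rw [Complex.ofReal_neg, map_neg, Complex.conj_ofReal]
  ring

lemma opI_add (A B : Matrix (Fin m) (Fin m) ℝ) : opI m (A + B) = opI m A + opI m B := by
  unfold opI
  rw [← map_add, ← smul_add]
  congr 2
  ext i j
  simp [Matrix.map_apply]

lemma opI_smul (c : ℝ) (A : Matrix (Fin m) (Fin m) ℝ) :
    opI m (c • A) = (c : ℂ) • opI m A := by
  unfold opI
  rw [← _root_.map_smul]
  congr 1
  rw [smul_comm]
  congr 1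
  ext i j
  simp [Matrix.map_apply]

lemma toEuclideanLin_mul (M N : Matrix (Fin m) (Fin m) ℂ) :
    Matrix.toEuclideanLin (M * N) =
      (Matrix.toEuclideanLin M) ∘ₗ (Matrix.toEuclideanLin N) := by
  apply LinearMap.ext
  intro v
  rw [LinearMap.comp_apply, Matrix.toEuclideanLin_apply, Matrix.toEuclideanLin_apply,
    Matrix.toEuclideanLin_apply]
  rw [WithLp.ofLp_toLp, ← Matrix.mulVec_mulVec]

lemma opI_comm (A B : Matrix (Fin m) (Fin m) ℝ) (hAB : A * B = B * A) :
    Commute (opI m A) (opI m B) := by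
  have key : ((Complex.I : ℂ) • A.map (Complex.ofRealHom)) *
      ((Complex.I : ℂ) • B.map (Complex.ofRealHom)) =
      ((Complex.I : ℂ) • B.map (Complex.ofRealHom)) *
      ((Complex.I : ℂ) • A.map (Complex.ofRealHom)) := by
    rw [smul_mul_assoc, mul_smul_comm, smul_mul_assoc, mul_smul_comm]
    congr 1
    congr 1
    rw [← Matrix.map_mul, ← Matrix.map_mul, hAB]
  show opI m A * opI m B = opI m B * opI m A
  unfold opI
  rw [Module.End.mul_eq_comp, Module.End.mul_eq_comp, ← toEuclideanLin_mul,
    ← toEuclideanLin_mul, key]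

lemma opI_inj (A : Matrix (Fin m) (Fin m) ℝ) (h : opI m A = 0) : A = 0 := by
  unfold opI at h
  have h0 : ((Complex.I : ℂ) • A.map (Complex.ofRealHom)) = 0 := by
    apply Matrix.toEuclideanLin.injective
    rw [h, map_zero]
  ext i j
  have := congrFun (congrFun h0 i) j
  simp only [Matrix.smul_apply, Matrix.map_apply, smul_eq_mul, Matrix.zero_apply] at this
  rcases mul_eq_zero.mp this with h' | h'
  · exact absurd h' Complex.I_ne_zero
  · simpa using h'

lemma opI_conj_eigen (A : Matrix (Fin m) (Fin m) ℝ) {μ : ℂ} (hμ : (starRingEnd ℂ) μ = μ)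
    {v : EuclideanSpace ℂ (Fin m)} (hv : opI m A v = μ • v) :
    opI m A ((WithLp.equiv 2 (Fin m → ℂ)).symm (star ((WithLp.equiv 2 (Fin m → ℂ)) v)))
      = (-μ) • ((WithLp.equiv 2 (Fin m → ℂ)).symm (star ((WithLp.equiv 2 (Fin m → ℂ)) v))) := by
  set N : Matrix (Fin m) (Fin m) ℂ := (Complex.I : ℂ) • A.map (Complex.ofRealHom) with hN
  set u : Fin m → ℂ := (WithLp.equiv 2 (Fin m → ℂ)) v with hu
  have hstarN : ∀ i j, star (N i j) = -(N i j) := by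
    intro i j
    have hNij : N i j = Complex.I * (A i j : ℂ) := by
      simp [hN, Matrix.smul_apply, Matrix.map_apply]
    rw [hNij, star_mul', Complex.star_def, Complex.conj_I, Complex.conj_ofReal]
    ring
  have hNu : N *ᵥ u = μ • u := by
    have h1 := congrArg (WithLp.equiv 2 (Fin m → ℂ)) hv
    rw [opI] at h1
    change N *ᵥ u = μ • u at h1
    exact h1
  have key : N *ᵥ (star u) = (-μ) • (star u) := by
    funext j
    have expand : star (((-N) *ᵥ u) j) = (N *ᵥ (star u)) j := by
      simp only [Matrix.mulVec, dotProduct, Matrix.neg_apply, Pi.star_apply]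
      rw [star_sum]
      refine Finset.sum_congr rfl fun k _ => ?_
      rw [star_mul', star_neg, hstarN, neg_neg]
    rw [← expand, Matrix.neg_mulVec, hNu]
    simp only [Pi.neg_apply, Pi.smul_apply, smul_eq_mul, star_neg, star_mul',
      Complex.star_def, hμ, Pi.star_apply]
    ring
  have goal2 : Matrix.toEuclideanLin N ((WithLp.equiv 2 (Fin m → ℂ)).symm (star u))
      = (-μ) • ((WithLp.equiv 2 (Fin m → ℂ)).symm (star u)) := by
    rw [Matrix.toEuclideanLin_apply]; exact congrArg (WithLp.toLp 2) key
  exact goal2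

theorem upper_bound (m : ℕ) (L : LieSubalgebra ℝ (Matrix (Fin m) (Fin m) ℝ))
    (hsk : L ≤ skewAdjointMatricesLieSubalgebra (1 : Matrix (Fin m) (Fin m) ℝ))
    (hab : ∀ x ∈ L, ∀ y ∈ L, ⁅x, y⁆ = (0 : Matrix (Fin m) (Fin m) ℝ)) :
    Module.finrank ℝ L ≤ m / 2 := by
  classical
  have hskew : ∀ A : L, (A : Matrix (Fin m) (Fin m) ℝ)ᵀ = -(A : Matrix (Fin m) (Fin m) ℝ) := by
    intro A
    have h := hsk A.2
    rw [mem_skewAdjointMatricesLieSubalgebra, mem_skewAdjointMatricesSubmodule] at h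
    simpa [Matrix.IsSkewAdjoint, Matrix.IsAdjointPair] using h
  set T : L → (EuclideanSpace ℂ (Fin m) →ₗ[ℂ] EuclideanSpace ℂ (Fin m)) :=
    fun A => opI m (A : Matrix (Fin m) (Fin m) ℝ) with hTdef
  have hsymm : ∀ A : L, (T A).IsSymmetric := fun A => opI_symmetric _ (hskew A)
  have hcomm : ∀ A B : L, Commute (T A) (T B) := by
    intro A B
    apply opI_comm
    have h := hab A A.2 B B.2
    rw [Ring.lie_def, sub_eq_zero] at h
    exact h
  set Efun : (L → ℂ) → Submodule ℂ (EuclideanSpace ℂ (Fin m)) :=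
    fun χ => ⨅ A : L, eigenspace (T A) (χ A) with hEfun
  have Htop : ⨆ χ : L → ℂ, Efun χ = ⊤ :=
    LinearMap.IsSymmetric.iSup_iInf_eq_top_of_commute hsymm (fun A B _ => hcomm A B)
  have Hindep : iSupIndep Efun :=
    (LinearMap.IsSymmetric.orthogonalFamily_iInf_eigenspaces hsymm).independent
  letI : Fintype {χ : L → ℂ // Efun χ ≠ ⊥} := Hindep.fintypeNeBotOfFiniteDimensional
  -- realness of joint eigenvalues
  have hreal : ∀ (χ : L → ℂ), Efun χ ≠ ⊥ → ∀ A : L, (starRingEnd ℂ) (χ A) = χ A := by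
    intro χ hχ A
    obtain ⟨v, hv, hv0⟩ := (Submodule.ne_bot_iff _).mp hχ
    have hvA : v ∈ eigenspace (T A) (χ A) := (Submodule.mem_iInf _).mp hv A
    exact (hsymm A).conj_eigenvalue_eq_self
      (hasEigenvalue_of_hasEigenvector ⟨hvA, hv0⟩)
  -- ℝ-linearity of joint eigenvalue functionals
  have hadd : ∀ (χ : L → ℂ), Efun χ ≠ ⊥ → ∀ A B : L, χ (A + B) = χ A + χ B := by
    intro χ hχ A B
    obtain ⟨v, hv, hv0⟩ := (Submodule.ne_bot_iff _).mp hχ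
    have h1 : T (A + B) v = χ (A + B) • v :=
      mem_eigenspace_iff.mp ((Submodule.mem_iInf _).mp hv (A + B))
    have h2 : T A v = χ A • v := mem_eigenspace_iff.mp ((Submodule.mem_iInf _).mp hv A)
    have h3 : T B v = χ B • v := mem_eigenspace_iff.mp ((Submodule.mem_iInf _).mp hv B)
    have hTab : T (A + B) = T A + T B := by
      show opI m ((A + B : L) : Matrix (Fin m) (Fin m) ℝ) = _
      rw [AddMemClass.coe_add, opI_add]
    rw [hTab] at h1
    apply smul_left_injective ℂ hv0
    show χ (A + B) • v = (χ A + χ B) • v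
    rw [add_smul, ← h2, ← h3, ← h1]
    rfl
  have hsmul : ∀ (χ : L → ℂ), Efun χ ≠ ⊥ → ∀ (c : ℝ) (A : L), χ (c • A) = (c : ℂ) * χ A := by
    intro χ hχ c A
    obtain ⟨v, hv, hv0⟩ := (Submodule.ne_bot_iff _).mp hχ
    have h1 : T (c • A) v = χ (c • A) • v :=
      mem_eigenspace_iff.mp ((Submodule.mem_iInf _).mp hv (c • A))
    have h2 : T A v = χ A • v := mem_eigenspace_iff.mp ((Submodule.mem_iInf _).mp hv A)
    have hTc : T (c • A) = (c : ℂ) • T A := by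
      show opI m ((c • A : L) : Matrix (Fin m) (Fin m) ℝ) = _
      have hc : ((c • A : L) : Matrix (Fin m) (Fin m) ℝ) = c • (A : Matrix (Fin m) (Fin m) ℝ) := rfl
      rw [hc, opI_smul]
    rw [hTc] at h1
    apply smul_left_injective ℂ hv0
    show χ (c • A) • v = ((c : ℂ) * χ A) • v
    rw [mul_smul, ← h2, ← h1]
    simp
  -- negation symmetry
  have hneg : ∀ (χ : L → ℂ), Efun χ ≠ ⊥ → Efun (-χ) ≠ ⊥ := by
    intro χ hχ
    obtain ⟨v, hv, hv0⟩ := (Submodule.ne_bot_iff _).mp hχ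
    rw [Submodule.ne_bot_iff]
    set w : EuclideanSpace ℂ (Fin m) :=
      (WithLp.equiv 2 (Fin m → ℂ)).symm (star ((WithLp.equiv 2 (Fin m → ℂ)) v)) with hw
    refine ⟨w, ?_, ?_⟩
    · rw [Submodule.mem_iInf]
      intro A
      rw [mem_eigenspace_iff]
      have := opI_conj_eigen (A : Matrix (Fin m) (Fin m) ℝ) (hreal χ hχ A)
        (mem_eigenspace_iff.mp ((Submodule.mem_iInf _).mp hv A))
      simpa [hw] using this
    · intro hw0
      apply hv0
      have : star ((WithLp.equiv 2 (Fin m → ℂ)) v) = 0 := by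
        have := congrArg (WithLp.equiv 2 (Fin m → ℂ)) hw0
        rwa [Equiv.apply_symm_apply] at this
      have hu0 : (WithLp.equiv 2 (Fin m → ℂ)) v = 0 := by
        have := congrArg star this
        rwa [star_star, star_zero] at this
      have := congrArg (WithLp.equiv 2 (Fin m → ℂ)).symm hu0
      rwa [Equiv.symm_apply_apply] at this
  -- the finite type of joint eigenvalue functionals
  set Λ : Type _ := {χ : L → ℂ // Efun χ ≠ ⊥} with hΛ
  set σ : Λ → Λ := fun χ => ⟨-χ.1, hneg χ.1 χ.2⟩ with hσ
  have hσσ : ∀ χ : Λ, σ (σ χ) = χ := by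
    intro χ; apply Subtype.ext; show -(-χ.1) = χ.1; rw [neg_neg]
  set f : Λ → ℕ := fun χ => ((Fintype.equivFin Λ) χ : ℕ) with hf
  have hfinj : Function.Injective f := by
    intro a b hab'
    exact (Fintype.equivFin Λ).injective (Fin.ext hab')
  set R : Finset Λ := Finset.univ.filter (fun χ => χ.1 ≠ 0 ∧ f χ < f (σ χ)) with hR
  -- cardinality bound : 2 * R.card ≤ m
  have hdisj : Disjoint R (R.image σ) := by
    rw [Finset.disjoint_left]
    intro ψ hψ hψ'
    obtain ⟨χ, hχR, rfl⟩ := Finset.mem_image.mp hψ'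
    have h1 := (Finset.mem_filter.mp hχR).2.2
    have h2 := (Finset.mem_filter.mp hψ).2.2
    rw [hσσ] at h2
    omega
  have hσinj : Function.Injective σ := Function.Involutive.injective hσσ
  have hcard2 : 2 * R.card ≤ Fintype.card Λ := by
    have hc : (R ∪ R.image σ).card = R.card + (R.image σ).card :=
      Finset.card_union_of_disjoint hdisj
    have him : (R.image σ).card = R.card := Finset.card_image_of_injective _ hσinj
    have hle : (R ∪ R.image σ).card ≤ Fintype.card Λ := by
      rw [← Finset.card_univ]
      exact Finset.card_le_card (Finset.subset_univ _)
    omega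
  have hΛm : Fintype.card Λ ≤ m := by
    have h1 : Fintype.card Λ ≤ finrank ℂ (EuclideanSpace ℂ (Fin m)) :=
      Hindep.subtype_ne_bot_le_finrank
    rwa [finrank_euclideanSpace_fin] at h1
  -- the injective linear map L → (R → ℝ)
  set Ψ : L →ₗ[ℝ] ({x : Λ // x ∈ R} → ℝ) :=
    { toFun := fun A => fun χ => ((χ.1 : Λ).1 A).re
      map_add' := by
        intro A B
        funext χ
        show ((χ.1 : Λ).1 (A + B)).re = ((χ.1 : Λ).1 A).re + ((χ.1 : Λ).1 B).re
        rw [hadd (χ.1 : Λ).1 (χ.1 : Λ).2 A B, Complex.add_re]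
      map_smul' := by
        intro c A
        funext χ
        show ((χ.1 : Λ).1 (c • A)).re = c * ((χ.1 : Λ).1 A).re
        rw [hsmul (χ.1 : Λ).1 (χ.1 : Λ).2 c A]
        simp } with hΨ
  have hΨinj : Function.Injective Ψ := by
    rw [← LinearMap.ker_eq_bot, Submodule.eq_bot_iff]
    intro A hA
    rw [LinearMap.mem_ker] at hA
    -- all joint eigenvalue functionals vanish on A
    have hz : ∀ χ : Λ, χ.1 A = 0 := by
      intro χ
      by_cases h0 : χ.1 = 0
      · rw [h0]; rfl
      · have hvanish : ∀ ψ : Λ, ψ ∈ R → ψ.1 A = 0 := by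
          intro ψ hψR
          have hre : (ψ.1 A).re = 0 := congrFun hA ⟨ψ, hψR⟩
          have hc := hreal ψ.1 ψ.2 A
          rw [Complex.conj_eq_iff_re] at hc
          rw [← hc, hre, Complex.ofReal_zero]
        have hne : f χ ≠ f (σ χ) := by
          intro h
          have : χ = σ χ := hfinj h
          apply h0
          have := congrArg (fun x : Λ => x.1) this
          simp only [hσ] at this
          have h2 : χ.1 = -χ.1 := this
          funext B
          have hB := congrFun h2 B
          have hB' : χ.1 B = -(χ.1 B) := hB
          have hBB : χ.1 B + χ.1 B = 0 := by
            nth_rewrite 2 [hB']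
            rw [add_neg_cancel]
          exact add_self_eq_zero.mp hBB
        rcases lt_or_gt_of_ne hne with hlt | hgt
        · exact hvanish χ (Finset.mem_filter.mpr ⟨Finset.mem_univ _, h0, hlt⟩)
        · have hσR : σ χ ∈ R := by
            refine Finset.mem_filter.mpr ⟨Finset.mem_univ _, ?_, ?_⟩
            · show -χ.1 ≠ 0
              exact neg_ne_zero.mpr h0
            · rw [hσσ]; exact hgt
          have := hvanish (σ χ) hσR
          have h2 : -(χ.1 A) = 0 := this
          exact neg_eq_zero.mp h2
    -- hence T A = 0
    have hT0 : T A = 0 := by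
      apply LinearMap.ext
      intro v
      have hv : v ∈ ⨆ χ : L → ℂ, Efun χ := by rw [Htop]; exact Submodule.mem_top
      refine Submodule.iSup_induction _ (motive := fun x => T A x = 0) hv ?_ (map_zero _) ?_
      · intro χ x hx
        by_cases hb : Efun χ = ⊥
        · rw [hb, Submodule.mem_bot] at hx
          rw [hx, map_zero]
        · have hx' : T A x = χ A • x := mem_eigenspace_iff.mp ((Submodule.mem_iInf _).mp hx A)
          rw [hx', show χ A = (0:ℂ) from hz ⟨χ, hb⟩, zero_smul]
      · intro x y hx hy
        rw [map_add, hx, hy, add_zero]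
    have : (A : Matrix (Fin m) (Fin m) ℝ) = 0 := opI_inj _ hT0
    exact Subtype.ext this
  -- conclude
  have hfin : finrank ℝ L ≤ finrank ℝ ({x : Λ // x ∈ R} → ℝ) :=
    LinearMap.finrank_le_finrank_of_injective hΨinj
  rw [Module.finrank_fintype_fun_eq_card, Fintype.card_coe] at hfin
  have : R.card ≤ m / 2 := by omega
  omega

end Upper

section Lower

variable (m : ℕ)

private def ea (i : Fin (m / 2)) : Fin m := ⟨2 * i, by omega⟩
private def eb (i : Fin (m / 2)) : Fin m := ⟨2 * i + 1, by omega⟩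

private lemma ea_ne_eb (i j : Fin (m / 2)) : ea m i ≠ eb m j := by
  simp only [ea, eb, Ne, Fin.mk.injEq]; omega

private lemma eb_ne_ea (i j : Fin (m / 2)) : eb m i ≠ ea m j := by
  simp only [ea, eb, Ne, Fin.mk.injEq]; omega

private lemma ea_inj {i j : Fin (m / 2)} (h : ea m i = ea m j) : i = j := by
  simp only [ea, Fin.mk.injEq] at h; exact Fin.ext (by omega)

private lemma eb_inj_ne {i j : Fin (m / 2)} (h : i ≠ j) : eb m i ≠ eb m j := by
  simp only [eb, Ne, Fin.mk.injEq]
  exact fun hc => h (Fin.ext (by omega))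

private noncomputable def Jmat (i : Fin (m / 2)) : Matrix (Fin m) (Fin m) ℝ :=
  single (ea m i) (eb m i) 1 - single (eb m i) (ea m i) 1

private lemma Jmat_mul_comm (i j : Fin (m / 2)) : Jmat m i * Jmat m j = Jmat m j * Jmat m i := by
  rcases eq_or_ne i j with rfl | hij
  · rfl
  · have e1 : single (ea m i) (eb m i) (1:ℝ) * single (ea m j) (eb m j) (1:ℝ) = 0 :=
      Matrix.single_mul_single_of_ne _ _ _ _ (eb_ne_ea m i j) _
    have e2 : single (ea m i) (eb m i) (1:ℝ) * single (eb m j) (ea m j) (1:ℝ) = 0 :=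
      Matrix.single_mul_single_of_ne _ _ _ _ (eb_inj_ne m hij) _
    have e3 : single (eb m i) (ea m i) (1:ℝ) * single (eb m j) (ea m j) (1:ℝ) = 0 :=
      Matrix.single_mul_single_of_ne _ _ _ _ (ea_ne_eb m i j) _
    have e4 : single (eb m i) (ea m i) (1:ℝ) * single (ea m j) (eb m j) (1:ℝ) = 0 :=
      Matrix.single_mul_single_of_ne _ _ _ _ (fun h => hij (ea_inj m h)) _
    have f1 : single (ea m j) (eb m j) (1:ℝ) * single (ea m i) (eb m i) (1:ℝ) = 0 :=
      Matrix.single_mul_single_of_ne _ _ _ _ (eb_ne_ea m j i) _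
    have f2 : single (ea m j) (eb m j) (1:ℝ) * single (eb m i) (ea m i) (1:ℝ) = 0 :=
      Matrix.single_mul_single_of_ne _ _ _ _ (eb_inj_ne m hij.symm) _
    have f3 : single (eb m j) (ea m j) (1:ℝ) * single (eb m i) (ea m i) (1:ℝ) = 0 :=
      Matrix.single_mul_single_of_ne _ _ _ _ (ea_ne_eb m j i) _
    have f4 : single (eb m j) (ea m j) (1:ℝ) * single (ea m i) (eb m i) (1:ℝ) = 0 :=
      Matrix.single_mul_single_of_ne _ _ _ _ (fun h => hij (ea_inj m h.symm)) _
    unfold Jmat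
    rw [sub_mul, mul_sub, mul_sub, sub_mul, mul_sub, mul_sub, e1, e2, e3, e4, f1, f2, f3, f4]

private lemma Jmat_linearIndependent : LinearIndependent ℝ (Jmat m) := by
  rw [Fintype.linearIndependent_iff]
  intro g hg i0
  have key := congrFun (congrFun hg (ea m i0)) (eb m i0)
  simp only [Finset.sum_apply, Matrix.sum_apply, Pi.smul_apply, Matrix.smul_apply,
    Matrix.zero_apply, Pi.zero_apply] at key
  rw [Finset.sum_eq_single i0] at key
  · have hval : Jmat m i0 (ea m i0) (eb m i0) = 1 := by
      have z : single (eb m i0) (ea m i0) (1:ℝ) (ea m i0) (eb m i0) = 0 :=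
        Matrix.single_apply_of_ne _ _ _ _ _ (fun h => eb_ne_ea m i0 i0 h.1)
      rw [Jmat, Matrix.sub_apply, Matrix.single_apply_same, z, sub_zero]
    rw [hval, smul_eq_mul, mul_one] at key
    exact key
  · intro j _ hji
    have z1 : single (ea m j) (eb m j) (1:ℝ) (ea m i0) (eb m i0) = 0 :=
      Matrix.single_apply_of_ne _ _ _ _ _ (fun h => hji (ea_inj m h.1))
    have z2 : single (eb m j) (ea m j) (1:ℝ) (ea m i0) (eb m i0) = 0 :=
      Matrix.single_apply_of_ne _ _ _ _ _ (fun h => eb_ne_ea m j i0 h.1)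
    simp [Jmat, Matrix.sub_apply, z1, z2]
  · simp

private lemma Jmat_transpose (i : Fin (m / 2)) : (Jmat m i)ᵀ = -Jmat m i := by
  unfold Jmat
  rw [transpose_sub]
  have h : ∀ (a b : Fin m), (single a b (1:ℝ))ᵀ = single b a 1 := by
    intro a b
    ext x y
    simp only [Matrix.transpose_apply, Matrix.single, Matrix.of_apply]
    exact if_congr (Iff.intro (fun h => ⟨h.2, h.1⟩) (fun h => ⟨h.2, h.1⟩)) rfl rfl
  rw [h, h]
  abel

theorem lower_bound (hm : 1 ≤ m) :
    ∃ L : LieSubalgebra ℝ (Matrix (Fin m) (Fin m) ℝ),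
      L ≤ skewAdjointMatricesLieSubalgebra (1 : Matrix (Fin m) (Fin m) ℝ) ∧
      (∀ x ∈ L, ∀ y ∈ L, ⁅x, y⁆ = (0 : Matrix (Fin m) (Fin m) ℝ)) ∧
      Module.finrank ℝ L = m / 2 := by
  classical
  set S : Submodule ℝ (Matrix (Fin m) (Fin m) ℝ) := Submodule.span ℝ (Set.range (Jmat m)) with hS
  -- all elements of S commute
  have hcomm : ∀ x ∈ S, ∀ y ∈ S, x * y = y * x := by
    intro x hx
    have hstep : ∀ y ∈ S, ∀ z ∈ Set.range (Jmat m), z * y = y * z := by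
      intro y hy z hz
      induction hy using Submodule.span_induction with
      | mem w hw =>
        obtain ⟨i, rfl⟩ := hz; obtain ⟨j, rfl⟩ := hw
        exact Jmat_mul_comm m i j
      | zero => simp
      | add a b _ _ ha hb => rw [mul_add, ha, hb, add_mul]
      | smul c a _ ha => rw [mul_smul_comm, ha, smul_mul_assoc]
    intro y hy
    induction hx using Submodule.span_induction with
    | mem w hw => exact hstep y hy w hw
    | zero => simp
    | add a b _ _ ha hb => rw [add_mul, ha, hb, mul_add]
    | smul c a _ ha => rw [smul_mul_assoc, ha, mul_smul_comm]
  have hbr : ∀ x ∈ S, ∀ y ∈ S, ⁅x, y⁆ = (0 : Matrix (Fin m) (Fin m) ℝ) := by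
    intro x hx y hy
    rw [Ring.lie_def, hcomm x hx y hy, sub_self]
  refine ⟨{ toSubmodule := S, lie_mem' := ?_ }, ?_, ?_, ?_⟩
  · intro x y hx hy
    rw [hbr x hx y hy]
    exact S.zero_mem
  · intro x hx
    rw [mem_skewAdjointMatricesLieSubalgebra, mem_skewAdjointMatricesSubmodule]
    change x ∈ S at hx
    unfold Matrix.IsSkewAdjoint Matrix.IsAdjointPair
    rw [Matrix.mul_one, Matrix.one_mul]
    induction hx using Submodule.span_induction with
    | mem w hw =>
      obtain ⟨i, rfl⟩ := hw
      exact Jmat_transpose m i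
    | zero => simp
    | add a b _ _ ha hb => rw [transpose_add, ha, hb, neg_add]
    | smul c a _ ha => rw [transpose_smul, ha, smul_neg]
  · exact hbr
  · show Module.finrank ℝ S = m / 2
    rw [finrank_span_eq_card (Jmat_linearIndependent m), Fintype.card_fin]

end Lower

/-- The maximal dimension of an abelian Lie subalgebra of the Lie algebra of
real skew-symmetric `m×m` matrices is exactly `⌊m/2⌋`. -/
theorem abelian_subalgebra_skewAdjoint_max_dim (m : ℕ) (hm : 1 ≤ m) :
    (∀ L : LieSubalgebra ℝ (Matrix (Fin m) (Fin m) ℝ),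
      L ≤ skewAdjointMatricesLieSubalgebra (1 : Matrix (Fin m) (Fin m) ℝ) →
      (∀ x ∈ L, ∀ y ∈ L, ⁅x, y⁆ = (0 : Matrix (Fin m) (Fin m) ℝ)) →
      Module.finrank ℝ L ≤ m / 2) ∧
    (∃ L : LieSubalgebra ℝ (Matrix (Fin m) (Fin m) ℝ),
      L ≤ skewAdjointMatricesLieSubalgebra (1 : Matrix (Fin m) (Fin m) ℝ) ∧
      (∀ x ∈ L, ∀ y ∈ L, ⁅x, y⁆ = (0 : Matrix (Fin m) (Fin m) ℝ)) ∧
      Module.finrank ℝ L = m / 2) :=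
  ⟨fun L h1 h2 => upper_bound m L h1 h2, lower_bound m hm⟩
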